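/- arXiv:2003.11286 — 4 statements merged into one kernel-verified Lean document; each statement's English description precedes it below -/
import Mathlib

section
/- Let R be an integral domain and let W : ℤ² → R be an elliptic net with W(0,0) = 0. Then W(−a,−b) = −W(a,b) for all (a,b) ∈ ℤ². -/
/-- An elliptic net of rank 2: a map `W : ℤ² → R` satisfying the four-term recurrence. -/
def IsEllipticNetRank2 {R : Type*} [CommRing R] (W : ℤ × ℤ → R) : Prop :=
  ∀ p q r s : ℤ × ℤ,
    W (p + q + s) * W (p - q) * W (r + s) * W r +
      W (q + r + s) * W (q - r) * W (p + s) * W p +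
        W (r + p + s) * W (r - p) * W (q + s) * W q = 0

theorem ellipticNet_neg {R : Type*} [CommRing R] [IsDomain R]
    (W : ℤ × ℤ → R) (hW : IsEllipticNetRank2 W) (h0 : W (0, 0) = 0) :
    ∀ a b : ℤ, W (-a, -b) = - W (a, b) := by
  have h00 : W 0 = 0 := h0
  have key : ∀ v : ℤ × ℤ, W v ≠ 0 → W (-v) = - W v := by
    intro v hv
    have h := hW v v 0 0
    simp only [add_zero, sub_self, zero_add, zero_sub, sub_zero, h00, mul_zero,
      zero_mul] at h
    have h2 : W v ^ 3 * (W v + W (-v)) = 0 := by linear_combination h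
    have h3 : W v + W (-v) = 0 :=
      (mul_eq_zero.mp h2).resolve_left (pow_ne_zero 3 hv)
    linear_combination h3
  intro a b
  by_cases h : W (a, b) = 0
  · by_cases h' : W (-a, -b) = 0
    · rw [h, h', neg_zero]
    · have := key (-a, -b) h'
      rw [show (-(-a, -b) : ℤ × ℤ) = (a, b) by simp] at this
      rw [h] at this ⊢
      rw [neg_zero]
      linear_combination this
  · have := key (a, b) h
    rw [show (-(a, b) : ℤ × ℤ) = (-a, -b) from rfl] at this
    exact this
end

section
/- Let R be an integral domain and let W : ℤ² → R be an elliptic net with W(0,0) = 0, W(1,0) = 1 and W(0,1) = 1. Then for every k ∈ ℤ, W(1,1)·W(2k−1,1) = W(k+1,1)·W(k−1,1)·W(k−1,0)² − W(k,0)·W(k−2,0)·W(k,1)². -/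
/-- An elliptic net of rank 2: a map `W : ℤ² → R` satisfying the four-term recurrence. -/
def IsEllipticNetRankTwo {R : Type*} [CommRing R] (W : ℤ × ℤ → R) : Prop :=
  ∀ p q r s : ℤ × ℤ,
    W (p + q + s) * W (p - q) * W (r + s) * W r +
      W (q + r + s) * W (q - r) * W (p + s) * W p +
        W (r + p + s) * W (r - p) * W (q + s) * W q = 0

lemma ellipticNet_odd {R : Type*} [CommRing R] [IsDomain R]
    (W : ℤ × ℤ → R) (hW : IsEllipticNetRankTwo W) (h0 : W (0, 0) = 0)
    (h10 : W (1, 0) = 1) : ∀ q : ℤ × ℤ, W (-q) = -W q := by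
  have key : ∀ q : ℤ × ℤ, W q * (W (-q) + W q) = 0 := by
    intro q
    have h := hW 0 q (1, 0) 0
    have h00 : W (0 : ℤ × ℤ) = 0 := h0
    simp only [zero_add, add_zero, zero_sub, sub_zero, h00, h10, mul_zero, zero_mul,
      mul_one, one_mul] at h
    linear_combination h
  intro q
  have k1 := key q
  have k2 := key (-q)
  rw [neg_neg] at k2
  rcases mul_eq_zero.1 k1 with hq | hs
  · rcases mul_eq_zero.1 k2 with hq' | hs'
    · rw [hq, hq']
      simp
    · linear_combination hs'
  · linear_combination hs

theorem ellipticNet_double_snd_odd {R : Type*} [CommRing R] [IsDomain R]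
    (W : ℤ × ℤ → R) (hW : IsEllipticNetRankTwo W) (h0 : W (0, 0) = 0)
    (h10 : W (1, 0) = 1) (h01 : W (0, 1) = 1) :
    ∀ k : ℤ, W (1, 1) * W (2 * k - 1, 1) =
      W (k + 1, 1) * W (k - 1, 1) * W (k - 1, 0) ^ 2 -
        W (k, 0) * W (k - 2, 0) * W (k, 1) ^ 2 := by
  intro k
  have hodd := ellipticNet_odd W hW h0 h10
  have h := hW (1, 0) (k - 1, 0) (k, 1) (0, 0)
  simp only [Prod.mk_add_mk, Prod.mk_sub_mk] at h
  have e1 : (1 + (k - 1) + 0, (0 : ℤ) + 0 + 0) = ((k, 0) : ℤ × ℤ) := by norm_num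
  have e2 : (1 - (k - 1), (0 : ℤ) - 0) = ((2 - k, 0) : ℤ × ℤ) := by rw [Prod.mk.injEq]; constructor <;> ring
  have e3 : (k + 0, (1 : ℤ) + 0) = ((k, 1) : ℤ × ℤ) := by norm_num
  have e4 : (k - 1 + k + 0, (0 : ℤ) + 1 + 0) = ((2 * k - 1, 1) : ℤ × ℤ) := by
    rw [Prod.mk.injEq]; constructor <;> ring
  have e5 : (k - 1 - k, (0 : ℤ) - 1) = ((-1, -1) : ℤ × ℤ) := by rw [Prod.mk.injEq]; constructor <;> ring
  have e6 : (1 + 0, (0 : ℤ) + 0) = ((1, 0) : ℤ × ℤ) := by norm_num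
  have e7 : (k + 1 + 0, (1 : ℤ) + 0 + 0) = ((k + 1, 1) : ℤ × ℤ) := by norm_num
  have e8 : (k - 1, (1 : ℤ) - 0) = ((k - 1, 1) : ℤ × ℤ) := by norm_num
  have e9 : (k - 1 + 0, (0 : ℤ) + 0) = ((k - 1, 0) : ℤ × ℤ) := by norm_num
  rw [e1, e2, e3, e4, e5, e6, e7, e8, e9] at h
  have o1 : W (2 - k, 0) = -W (k - 2, 0) := by
    have := hodd (k - 2, 0)
    rw [show (-(k - 2, 0) : ℤ × ℤ) = (2 - k, 0) by rw [Prod.neg_mk, Prod.mk.injEq]; constructor <;> ring] at this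
    linear_combination this
  have o2 : W (-1, -1) = -W (1, 1) := by
    have := hodd (1, 1)
    rw [show (-(1, 1) : ℤ × ℤ) = ((-1, -1) : ℤ × ℤ) by rfl] at this
    linear_combination this
  rw [o1, o2, h10] at h
  linear_combination -h
end

section
/- Let R be an integral domain and let W : ℤ² → R be an elliptic net with W(0,0) = 0, W(1,0) = 1 and W(0,1) = 1. Then for every k ∈ ℤ, W(−1,1)·W(2k+1,1) = W(k−1,1)·W(k+1,1)·W(k+1,0)² − W(k,0)·W(k+2,0)·W(k,1)². -/
/-- An elliptic net of rank 2: a map `W : ℤ² → R` satisfying the four-term recurrence. -/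
def IsEllipticNet2 {R : Type*} [CommRing R] (W : ℤ × ℤ → R) : Prop :=
  ∀ p q r s : ℤ × ℤ,
    W (p + q + s) * W (p - q) * W (r + s) * W r +
      W (q + r + s) * W (q - r) * W (p + s) * W p +
        W (r + p + s) * W (r - p) * W (q + s) * W q = 0

theorem ellipticNet_doubleAdd_snd_odd {R : Type*} [CommRing R] [IsDomain R]
    (W : ℤ × ℤ → R) (hW : IsEllipticNet2 W) (h0 : W (0, 0) = 0)
    (h10 : W (1, 0) = 1) (h01 : W (0, 1) = 1) :
    ∀ k : ℤ, W (-1, 1) * W (2 * k + 1, 1) =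
      W (k - 1, 1) * W (k + 1, 1) * W (k + 1, 0) ^ 2 -
        W (k, 0) * W (k + 2, 0) * W (k, 1) ^ 2 := by
  have h00 : W 0 = 0 := h0
  -- Symmetrization identity, from the recurrence with q = p.
  have hI : ∀ p r s : ℤ × ℤ,
      W (p + r + s) * W (p + s) * W p * (W (p - r) + W (r - p)) = 0 := by
    intro p r s
    have h := hW p p r s
    rw [sub_self, h00, show r + p + s = p + r + s by ring] at h
    linear_combination h
  -- Key consequence
  have hJ : ∀ u w v : ℤ × ℤ, W u ≠ 0 → W w ≠ 0 → W v + W (-v) ≠ 0 →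
      W (u + w - v) = 0 := by
    intro u w v hu hw hv
    have h := hI u (u - v) (w - u)
    rw [show u + (u - v) + (w - u) = u + w - v by ring,
        show u + (w - u) = w by ring, show u - (u - v) = v by ring,
        show u - v - u = -v by ring] at h
    rcases mul_eq_zero.mp h with h' | h'
    · rcases mul_eq_zero.mp h' with h'' | h''
      · rcases mul_eq_zero.mp h'' with h3 | h3
        · exact h3
        · exact absurd h3 hw
      · exact absurd h'' hu
    · exact absurd h' hv
  have hW10 : W ((1 : ℤ), (0 : ℤ)) ≠ 0 := by rw [h10]; exact one_ne_zero
  have hW01 : W ((0 : ℤ), (1 : ℤ)) ≠ 0 := by rw [h01]; exact one_ne_zero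
  -- W(-1,0) = -1
  have hm1 : W (-1, 0) = -1 := by
    by_contra hne
    have hv : W ((1 : ℤ), (0 : ℤ)) + W (-((1 : ℤ), (0 : ℤ))) ≠ 0 := by
      intro h
      apply hne
      have := eq_neg_of_add_eq_zero_right h
      rw [show (-((1 : ℤ), (0 : ℤ)) : ℤ × ℤ) = (-1, 0) by
        simp [Prod.ext_iff]] at this
      rw [this, h10]
    have h := hJ (1, 0) (0, 1) (1, 0) hW10 hW01 hv
    rw [show ((1, 0) + (0, 1) - (1, 0) : ℤ × ℤ) = (0, 1) by ring] at h
    exact hW01 h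
  have hWm1 : W ((-1 : ℤ), (0 : ℤ)) ≠ 0 := by
    rw [hm1]; exact neg_ne_zero.mpr one_ne_zero
  -- full oddness
  have hodd : ∀ v : ℤ × ℤ, W (-v) = -W v := by
    intro v
    by_contra hne
    have hv : W v + W (-v) ≠ 0 := by
      intro h
      exact hne (eq_neg_of_add_eq_zero_right h)
    have hv' : W (-v) + W (- -v) ≠ 0 := by
      rw [neg_neg, add_comm]; exact hv
    have h1 : W (-v) = 0 := by
      have h := hJ (1, 0) (-1, 0) v hW10 hWm1 hv
      rwa [show ((1, 0) + (-1, 0) - v : ℤ × ℤ) = -v by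
        simp [Prod.ext_iff]] at h
    have h2 : W v = 0 := by
      have h := hJ (1, 0) (-1, 0) (-v) hW10 hWm1 hv'
      rwa [show ((1, 0) + (-1, 0) - -v : ℤ × ℤ) = v by
        simp [Prod.ext_iff]] at h
    rw [h1, h2] at hv
    exact hv (add_zero 0)
  intro k
  have h := hW (k + 1, 0) (k, 1) (1, 0) (0, 0)
  rw [show ((k + 1, 0) + (k, 1) + (0, 0) : ℤ × ℤ) = (2 * k + 1, 1) by
        simp [Prod.ext_iff]; ring,
      show ((k + 1, 0) - (k, 1) : ℤ × ℤ) = (1, -1) by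
        simp [Prod.ext_iff],
      show ((1, 0) + (0, 0) : ℤ × ℤ) = (1, 0) by simp [Prod.ext_iff],
      show ((k, 1) + (1, 0) + (0, 0) : ℤ × ℤ) = (k + 1, 1) by
        simp [Prod.ext_iff],
      show ((k, 1) - (1, 0) : ℤ × ℤ) = (k - 1, 1) by simp [Prod.ext_iff],
      show ((k + 1, 0) + (0, 0) : ℤ × ℤ) = (k + 1, 0) by simp [Prod.ext_iff],
      show ((1, 0) + (k + 1, 0) + (0, 0) : ℤ × ℤ) = (k + 2, 0) by
        simp [Prod.ext_iff]; ring,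
      show ((1, 0) - (k + 1, 0) : ℤ × ℤ) = (-k, 0) by
        simp [Prod.ext_iff],
      show ((k, 1) + (0, 0) : ℤ × ℤ) = (k, 1) by simp [Prod.ext_iff],
      h10] at h
  have e1 : W (1, -1) = -W (-1, 1) := by
    have := hodd (-1, 1)
    rw [show (-((-1 : ℤ), (1 : ℤ)) : ℤ × ℤ) = (1, -1) by simp [Prod.ext_iff]] at this
    rw [this]
  have e2 : W (-k, 0) = -W (k, 0) := by
    have := hodd (k, 0)
    rwa [show (-(k, (0 : ℤ)) : ℤ × ℤ) = (-k, 0) by simp [Prod.ext_iff]] at this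
  rw [e1, e2] at h
  linear_combination -h
end

section
/- Let R be an integral domain and let W : ℤ² → R be an elliptic net with W(0,0) = 0, W(1,0) = 1 and W(0,1) = 1. Then for every k ∈ ℤ, W(−2,1)·W(2k+2,1) = W(k−1,1)·W(k+1,1)·W(k+2,0)² − W(k+1,0)·W(k+3,0)·W(k,1)². -/
theorem ellipticNet_doubleAdd_snd_even {R : Type*} [CommRing R] [IsDomain R]
    (W : ℤ × ℤ → R) (hW : IsEllipticNetRank2 W) (h0 : W (0, 0) = 0)
    (h10 : W (1, 0) = 1) (h01 : W (0, 1) = 1) :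
    ∀ k : ℤ, W (-2, 1) * W (2 * k + 2, 1) =
      W (k - 1, 1) * W (k + 1, 1) * W (k + 2, 0) ^ 2 -
        W (k + 1, 0) * W (k + 3, 0) * W (k, 1) ^ 2 := by
  have h0' : W 0 = 0 := by rwa [← Prod.mk_zero_zero]
  have base : ∀ p : ℤ × ℤ, W p * (W p + W (-p)) = 0 := by
    intro p
    have h := hW p (1, 0) 0 0
    simp only [add_zero, sub_zero, zero_add, zero_sub, h0', h10] at h
    linear_combination h
  have hodd : ∀ p : ℤ × ℤ, W (-p) = -W p := by
    intro p
    rcases mul_eq_zero.1 (base p) with hp | hp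
    · have h2 := base (-p)
      rw [neg_neg, hp] at h2
      simp only [add_zero] at h2
      rcases mul_eq_zero.1 h2 with h3 | h3 <;> simp [hp, h3]
    · linear_combination hp
  intro k
  have h := hW (k, 1) (k + 2, 0) (1, 0) 0
  simp only [add_zero, sub_zero, Prod.mk_add_mk, Prod.mk_sub_mk] at h
  ring_nf at h
  have hneg := hodd (k - 1, 1)
  have e : (-((k : ℤ) - 1, (1 : ℤ))) = ((1 - k : ℤ), (-1 : ℤ)) := by
    simp [Prod.ext_iff]
  rw [e] at hneg
  rw [hneg, h10] at h
  ring_nf at h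
  ring_nf
  linear_combination h
end
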